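/- The entropic-regularized UOT objective F(β) = ⟨β, C⟩ + λ Σ_{ij} β_{ij}(log β_{ij} − 1) + λ_KL(KL̃(β𝟙 ‖ n) + KL̃(βᵀ𝟙 ‖ m)) with λ > 0, λ_KL ≥ 0 attains its infimum over β ∈ ℝ_{>0}^{n×m}, i.e., a minimizer exists (and by strict convexity is unique). -/

import Mathlib

noncomputable def genKL {n : ℕ} (p q : Fin n → ℝ) : ℝ :=
  ∑ i, (p i * Real.log (p i / q i) - p i + q i)

/-- The entropic-regularized UOT objective of Definition 3 (MEMA policy blending). -/
noncomputable def uotObj {n m : ℕ} (C : Matrix (Fin n) (Fin m) ℝ) (lam lamKL : ℝ)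
    (nv : Fin n → ℝ) (mv : Fin m → ℝ) (β : Matrix (Fin n) (Fin m) ℝ) : ℝ :=
  (∑ i, ∑ j, β i j * C i j)
    + lam * ∑ i, ∑ j, β i j * (Real.log (β i j) - 1)
    + lamKL * (genKL (fun i => ∑ j, β i j) nv + genKL (fun j => ∑ i, β i j) mv)

open Finset in
lemma sum_update_eq {k : ℕ} {α : Type*} [DecidableEq (Fin k)] (f : Fin k → α) (i : Fin k) (v : α)
    (H : Fin k → α → ℝ) :
    ∑ a, H a (Function.update f i v a) = ∑ a, H a (f a) + (H i v - H i (f i)) := by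
  have h : (fun a => H a (Function.update f i v a))
      = Function.update (fun a => H a (f a)) i (H i v) := by
    funext a
    rcases eq_or_ne a i with rfl | h
    · simp
    · simp [Function.update_of_ne h]
  rw [h, Finset.sum_update_of_mem (Finset.mem_univ i),
    Finset.sum_eq_sum_sdiff_singleton_add (Finset.mem_univ i) (fun a => H a (f a))]
  ring

lemma xlogx_ge (x t : ℝ) (hx : 0 ≤ x) : x * t - Real.exp t ≤ x * Real.log x - x := by
  rcases eq_or_lt_of_le hx with h | h
  · simp [← h]
    nlinarith [Real.exp_pos t]
  · have h1 := Real.add_one_le_exp (t - Real.log x)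
    rw [Real.exp_sub, Real.exp_log h] at h1
    have h2 := mul_le_mul_of_nonneg_right h1 h.le
    rw [div_mul_cancel₀ _ (ne_of_gt h)] at h2
    nlinarith

lemma entry_lb (c lam x : ℝ) (hlam : 0 < lam) (hx : 0 ≤ x) :
    -(lam * Real.exp (-c / lam)) ≤ x * c + lam * (x * (Real.log x - 1)) := by
  have h := xlogx_ge x (-c / lam) hx
  have h2 := mul_le_mul_of_nonneg_left h hlam.le
  have hc : lam * (x * (-c / lam)) = -(x * c) := by field_simp
  nlinarith [h2]

lemma genKL_nonneg {k : ℕ} (p q : Fin k → ℝ) (hp : ∀ i, 0 ≤ p i) (hq : ∀ i, 0 < q i) :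
    0 ≤ genKL p q := by
  unfold genKL
  apply Finset.sum_nonneg
  intro i _
  rcases eq_or_lt_of_le (hp i) with h | h
  · simp [← h]
    exact (hq i).le
  · have e : Real.log (p i / q i) = -Real.log (q i / p i) := by
      rw [← Real.log_inv]
      congr 1
      field_simp
    have h4 := Real.log_le_sub_one_of_pos (div_pos (hq i) h)
    have h5 := mul_le_mul_of_nonneg_left h4 h.le
    have h6 : p i * (q i / p i) = q i := by field_simp
    nlinarith [h5]

lemma phi_incr {r t q : ℝ} (hr : 0 ≤ r) (hq : 0 < q) (ht : 0 < t) :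
    ((r + t) * Real.log ((r + t) / q) - (r + t) + q) - (r * Real.log (r / q) - r + q)
      ≤ t * Real.log ((r + t) / q) := by
  rcases eq_or_lt_of_le hr with h | h
  · simp [← h]
    linarith
  · have hrt : 0 < r + t := by linarith
    rw [Real.log_div (ne_of_gt hrt) (ne_of_gt hq), Real.log_div (ne_of_gt h) (ne_of_gt hq)]
    have e3 : Real.log (r + t) - Real.log r = Real.log ((r + t) / r) :=
      (Real.log_div (ne_of_gt hrt) (ne_of_gt h)).symm
    have e4 : Real.log ((r + t) / r) ≤ (r + t) / r - 1 :=
      Real.log_le_sub_one_of_pos (by positivity)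
    have e5 : r * Real.log ((r + t) / r) ≤ t := by
      have := mul_le_mul_of_nonneg_left e4 h.le
      have h6 : r * ((r + t) / r - 1) = t := by field_simp; ring
      linarith
    nlinarith [e5, e3]

lemma mul_log_div (q : ℝ) (hq : q ≠ 0) (p : ℝ) :
    p * Real.log (p / q) = p * Real.log p - p * Real.log q := by
  rcases eq_or_ne p 0 with rfl | hp
  · simp
  · rw [Real.log_div hp hq]; ring

lemma uot_cont {n m : ℕ} (C : Matrix (Fin n) (Fin m) ℝ) (lam lamKL : ℝ)
    (nv : Fin n → ℝ) (mv : Fin m → ℝ) (hn : ∀ i, 0 < nv i) (hm : ∀ j, 0 < mv j) :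
    Continuous (uotObj C lam lamKL nv mv) := by
  have h : uotObj C lam lamKL nv mv = fun β =>
      (∑ i, ∑ j, β i j * C i j)
      + lam * ∑ i, ∑ j, (β i j * Real.log (β i j) - β i j)
      + lamKL * ((∑ i, ((∑ j, β i j) * Real.log (∑ j, β i j) - (∑ j, β i j) * Real.log (nv i)
            - (∑ j, β i j) + nv i))
        + (∑ j, ((∑ i, β i j) * Real.log (∑ i, β i j) - (∑ i, β i j) * Real.log (mv j)
            - (∑ i, β i j) + mv j))) := by
    funext β
    unfold uotObj genKL
    have e0 : ∀ x : ℝ, x * (Real.log x - 1) = x * Real.log x - x := fun x => by ring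
    have e1 : ∀ (p : ℝ) (i : Fin n), p * Real.log (p / nv i) - p + nv i =
        p * Real.log p - p * Real.log (nv i) - p + nv i := fun p i => by
      rw [mul_log_div (nv i) (ne_of_gt (hn i))]
    have e2 : ∀ (p : ℝ) (j : Fin m), p * Real.log (p / mv j) - p + mv j =
        p * Real.log p - p * Real.log (mv j) - p + mv j := fun p j => by
      rw [mul_log_div (mv j) (ne_of_gt (hm j))]
    simp only [e0, e1, e2]
  rw [h]
  have hap : ∀ (i : Fin n) (j : Fin m), Continuous fun β : Matrix (Fin n) (Fin m) ℝ => β i j :=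
    fun i j => (continuous_apply j).comp (continuous_apply i)
  have hrow : ∀ i, Continuous fun β : Matrix (Fin n) (Fin m) ℝ => ∑ j, β i j :=
    fun i => continuous_finset_sum _ fun j _ => hap i j
  have hcol : ∀ j, Continuous fun β : Matrix (Fin n) (Fin m) ℝ => ∑ i, β i j :=
    fun j => continuous_finset_sum _ fun i _ => hap i j
  have hml : ∀ {f : Matrix (Fin n) (Fin m) ℝ → ℝ}, Continuous f →
      Continuous fun β => f β * Real.log (f β) :=
    fun hf => Real.continuous_mul_log.comp hf
  refine Continuous.add (Continuous.add ?_ ?_) ?_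
  · exact continuous_finset_sum _ fun i _ => continuous_finset_sum _ fun j _ =>
      (hap i j).mul continuous_const
  · exact continuous_const.mul (continuous_finset_sum _ fun i _ =>
      continuous_finset_sum _ fun j _ => (hml (hap i j)).sub (hap i j))
  · refine continuous_const.mul (Continuous.add ?_ ?_)
    · exact continuous_finset_sum _ fun i _ =>
        ((((hml (hrow i)).sub ((hrow i).mul continuous_const)).sub (hrow i)).add
          continuous_const)
    · exact continuous_finset_sum _ fun j _ =>
        ((((hml (hcol j)).sub ((hcol j).mul continuous_const)).sub (hcol j)).add
          continuous_const)
set_option maxHeartbeats 1000000 in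
lemma outer_bound {n m : ℕ} (C : Matrix (Fin n) (Fin m) ℝ) (lam lamKL B CA F0 R : ℝ)
    (hlam : 0 < lam) (hlamKL : 0 ≤ lamKL)
    (nv : Fin n → ℝ) (mv : Fin m → ℝ) (hn : ∀ i, 0 < nv i) (hm : ∀ j, 0 < mv j)
    (hBdef : B = lam * ∑ i, ∑ j, Real.exp (-C i j / lam))
    (hCAdef : CA = ∑ i, ∑ j, |C i j|)
    (hR1 : (1:ℝ) ≤ R)
    (hRexp : Real.exp ((|F0| + B + 1 + CA + lam) / lam) ≤ R) :
    ∀ β : Matrix (Fin n) (Fin m) ℝ, (∀ a b, 0 ≤ β a b) →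
      ∀ i j, R ≤ β i j → F0 + 1 ≤ uotObj C lam lamKL nv mv β := by
    intro β hβ i j hRij
    set g : Fin n → Fin m → ℝ :=
      fun a b => β a b * C a b + lam * (β a b * (Real.log (β a b) - 1)) with hg
    clear_value g
    have hT : ∀ a b, 0 ≤ g a b + lam * Real.exp (-C a b / lam) := by
      intro a b
      have h1 := entry_lb (C a b) lam (β a b) hlam (hβ a b)
      simp only [hg]
      linarith
    have hsum : g i j + lam * Real.exp (-C i j / lam)
        ≤ ∑ a, ∑ b, (g a b + lam * Real.exp (-C a b / lam)) := by
      refine le_trans (Finset.single_le_sum (fun b _ => hT i b) (Finset.mem_univ j)) ?_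
      exact Finset.single_le_sum
        (f := fun a => ∑ b, (g a b + lam * Real.exp (-C a b / lam)))
        (fun a _ => Finset.sum_nonneg fun b _ => hT a b) (Finset.mem_univ i)
    have hsplit : ∑ a, ∑ b, (g a b + lam * Real.exp (-C a b / lam))
        = (∑ a, ∑ b, g a b) + B := by
      rw [hBdef, Finset.mul_sum, ← Finset.sum_add_distrib]
      refine Finset.sum_congr rfl fun a _ => ?_
      rw [Finset.mul_sum, ← Finset.sum_add_distrib]
    have hsg : ∑ a, ∑ b, g a b = (∑ a, ∑ b, β a b * C a b)
        + lam * ∑ a, ∑ b, β a b * (Real.log (β a b) - 1) := by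
      simp only [hg]
      rw [Finset.mul_sum, ← Finset.sum_add_distrib]
      refine Finset.sum_congr rfl fun a _ => ?_
      rw [Finset.mul_sum, ← Finset.sum_add_distrib]
    have hFG : uotObj C lam lamKL nv mv β = (∑ a, ∑ b, g a b)
        + lamKL * (genKL (fun i => ∑ j, β i j) nv + genKL (fun j => ∑ i, β i j) mv) := by
      unfold uotObj
      rw [hsg]
    have hgij : F0 + 1 + B ≤ g i j := by
      have hx : (1 : ℝ) ≤ β i j := le_trans hR1 hRij
      have hx0 : (0 : ℝ) < β i j := lt_of_lt_of_le one_pos hx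
      have hCij : -CA ≤ C i j := by
        have h1 : |C i j| ≤ CA := by
          rw [hCAdef]
          refine le_trans (Finset.single_le_sum (f := fun b => |C i b|) (fun b _ => abs_nonneg _) (Finset.mem_univ j)) ?_
          exact Finset.single_le_sum (f := fun a => ∑ b, |C a b|)
            (fun a _ => Finset.sum_nonneg fun b _ => abs_nonneg _) (Finset.mem_univ i)
        linarith [neg_abs_le (C i j)]
      have hlog : (|F0| + B + 1 + CA + lam) / lam ≤ Real.log (β i j) := by
        rw [Real.le_log_iff_exp_le hx0]
        exact le_trans hRexp hRij
      have hlog2 : |F0| + B + 1 + CA + lam ≤ lam * Real.log (β i j) := by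
        rw [div_le_iff₀ hlam] at hlog
        linarith
      have hfac : |F0| + B + 1 ≤ C i j + lam * (Real.log (β i j) - 1) := by
        have hexp : lam * (Real.log (β i j) - 1) = lam * Real.log (β i j) - lam := by ring
        linarith
      have hge : g i j = β i j * (C i j + lam * (Real.log (β i j) - 1)) := by
        simp only [hg]; ring
      rw [hge]
      have hB0 : 0 ≤ B := by
        rw [hBdef]
        exact mul_nonneg hlam.le (Finset.sum_nonneg fun a _ => Finset.sum_nonneg fun b _ => (Real.exp_pos _).le)
      have hfacpos : (0 : ℝ) ≤ |F0| + B + 1 := by linarith [abs_nonneg F0]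
      have hkey := mul_le_mul hx hfac hfacpos (le_trans zero_le_one hx)
      rw [one_mul] at hkey
      linarith [le_abs_self F0]
    have hKLβ : 0 ≤ lamKL * (genKL (fun i => ∑ j, β i j) nv + genKL (fun j => ∑ i, β i j) mv) := by
      refine mul_nonneg hlamKL (add_nonneg ?_ ?_)
      · exact genKL_nonneg _ _ (fun i => Finset.sum_nonneg fun j _ => hβ i j) hn
      · exact genKL_nonneg _ _ (fun j => Finset.sum_nonneg fun i _ => hβ i j) hm
    have heij : (0:ℝ) ≤ lam * Real.exp (-C i j / lam) :=
      mul_nonneg hlam.le (Real.exp_pos _).le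
    calc F0 + 1 = (F0 + 1 + B) + 0 - B := by ring
      _ ≤ (g i j + lam * Real.exp (-C i j / lam)) - B := by linarith [hgij, heij]
      _ ≤ (∑ a, ∑ b, (g a b + lam * Real.exp (-C a b / lam))) - B := by linarith [hsum]
      _ = ∑ a, ∑ b, g a b := by rw [hsplit]; ring
      _ ≤ uotObj C lam lamKL nv mv β := by rw [hFG]; linarith [hKLβ]
set_option maxHeartbeats 1000000 in
lemma interior_pos {n m : ℕ} (C : Matrix (Fin n) (Fin m) ℝ) (lam lamKL R : ℝ)
    (hlam : 0 < lam) (hlamKL : 0 ≤ lamKL) (hR0 : 0 < R)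
    (nv : Fin n → ℝ) (mv : Fin m → ℝ) (hn : ∀ i, 0 < nv i) (hm : ∀ j, 0 < mv j)
    (βs : Matrix (Fin n) (Fin m) ℝ) (hβsK : ∀ a b, βs a b ∈ Set.Icc (0:ℝ) R)
    (hmin : ∀ β : Matrix (Fin n) (Fin m) ℝ, (∀ a b, β a b ∈ Set.Icc (0:ℝ) R) →
      uotObj C lam lamKL nv mv βs ≤ uotObj C lam lamKL nv mv β) :
    ∀ i j, 0 < βs i j := by
  classical
  have hβsnn : ∀ a b, 0 ≤ βs a b := fun a b => (hβsK a b).1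
  intro i j
  rcases lt_or_eq_of_le (hβsnn i j) with hlt | heq
  · exact hlt
  exfalso
  replace heq : βs i j = 0 := heq.symm
  set rs : ℝ := ∑ b, βs i b with hrs
  set cs : ℝ := ∑ a, βs a j with hcs
  have hrs0 : 0 ≤ rs := Finset.sum_nonneg fun b _ => hβsnn i b
  have hcs0 : 0 ≤ cs := Finset.sum_nonneg fun a _ => hβsnn a j
  have hrsR : rs ≤ m * R := by
    rw [hrs]
    calc ∑ b, βs i b ≤ ∑ _b : Fin m, R := Finset.sum_le_sum fun b _ => (hβsK i b).2
      _ = m * R := by simp [Finset.sum_const, Finset.card_univ]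
  have hcsR : cs ≤ n * R := by
    rw [hcs]
    calc ∑ a, βs a j ≤ ∑ _a : Fin n, R := Finset.sum_le_sum fun a _ => (hβsK a j).2
      _ = n * R := by simp [Finset.sum_const, Finset.card_univ]
  set Dr : ℝ := Real.log ((m * R + R) / nv i) with hDr
  set Dc : ℝ := Real.log ((n * R + R) / mv j) with hDc
  set Kc : ℝ := C i j - lam + lamKL * (Dr + Dc) with hKcdef
  set t : ℝ := min R (Real.exp (-(Kc + 1) / lam)) with htdef
  have ht0 : 0 < t := lt_min hR0 (Real.exp_pos _)
  have htR : t ≤ R := min_le_left _ _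
  set v : Fin m → ℝ := Function.update (βs i) j t with hv
  set β' : Matrix (Fin n) (Fin m) ℝ := Function.update βs i v with hβ'
  have hβ'K : ∀ a b, β' a b ∈ Set.Icc (0:ℝ) R := by
    intro a b
    rcases eq_or_ne a i with rfl | ha
    · rw [hβ']
      erw [Function.update_self]
      rcases eq_or_ne b j with rfl | hb
      · rw [hv]
        simp only [Function.update_self]
        exact ⟨ht0.le, htR⟩
      · rw [hv]
        simp only [Function.update_of_ne hb]
        exact hβsK a b
    · rw [hβ']
      erw [Function.update_of_ne ha]
      exact hβsK a b
  have ha1 : (∑ a, ∑ b, β' a b * C a b) = (∑ a, ∑ b, βs a b * C a b) + t * C i j := by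
    rw [hβ', sum_update_eq βs i v (fun a w => ∑ b, w b * C a b)]
    rw [hv, sum_update_eq (βs i) j t (fun b x => x * C i b), heq]
    ring
  have ha2 : (∑ a, ∑ b, β' a b * (Real.log (β' a b) - 1))
      = (∑ a, ∑ b, βs a b * (Real.log (βs a b) - 1)) + t * (Real.log t - 1) := by
    rw [hβ', sum_update_eq βs i v (fun a w => ∑ b, w b * (Real.log (w b) - 1))]
    rw [hv, sum_update_eq (βs i) j t (fun b x => x * (Real.log x - 1)), heq]
    simp [Real.log_zero]
    try ring
  have hrow' : (fun a => ∑ b, β' a b) = Function.update (fun a => ∑ b, βs a b) i (rs + t) := by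
    funext a
    by_cases ha : a = i
    · subst ha
      rw [hβ']; erw [Function.update_self, Function.update_self]
      rw [hv, sum_update_eq (βs a) j t (fun _ x => x), heq, hrs]
      ring
    · rw [hβ']; erw [Function.update_of_ne ha, Function.update_of_ne ha]
  have hcol' : (fun b => ∑ a, β' a b) = Function.update (fun b => ∑ a, βs a b) j (cs + t) := by
    funext b
    have hstep : ∑ a, β' a b = (∑ a, βs a b) + (v b - βs i b) := by
      rw [hβ', sum_update_eq βs i v (fun _ w => w b)]
    rw [hstep]
    by_cases hb : b = j
    · subst hb
      rw [hv]
      simp only [Function.update_self, heq, hcs]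
      ring
    · rw [hv]
      simp only [Function.update_of_ne hb]
      ring
  have ha3 : genKL (fun a => ∑ b, β' a b) nv
      = genKL (fun a => ∑ b, βs a b) nv
        + (((rs + t) * Real.log ((rs + t) / nv i) - (rs + t) + nv i)
          - (rs * Real.log (rs / nv i) - rs + nv i)) := by
    unfold genKL
    rw [hrow', sum_update_eq (fun a => ∑ b, βs a b) i (rs + t)
      (fun a p => p * Real.log (p / nv a) - p + nv a)]
  have ha4 : genKL (fun b => ∑ a, β' a b) mv
      = genKL (fun b => ∑ a, βs a b) mv
        + (((cs + t) * Real.log ((cs + t) / mv j) - (cs + t) + mv j)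
          - (cs * Real.log (cs / mv j) - cs + mv j)) := by
    unfold genKL
    rw [hcol', sum_update_eq (fun b => ∑ a, βs a b) j (cs + t)
      (fun b p => p * Real.log (p / mv b) - p + mv b)]
  have hFβ' : uotObj C lam lamKL nv mv β' = uotObj C lam lamKL nv mv βs + (t * C i j + lam * (t * (Real.log t - 1))
      + lamKL * ((((rs + t) * Real.log ((rs + t) / nv i) - (rs + t) + nv i)
            - (rs * Real.log (rs / nv i) - rs + nv i))
          + (((cs + t) * Real.log ((cs + t) / mv j) - (cs + t) + mv j)
            - (cs * Real.log (cs / mv j) - cs + mv j)))) := by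
    unfold uotObj
    rw [ha1, ha2, ha3, ha4]
    ring
  have hb1 : ((rs + t) * Real.log ((rs + t) / nv i) - (rs + t) + nv i)
      - (rs * Real.log (rs / nv i) - rs + nv i) ≤ t * Dr := by
    refine le_trans (phi_incr hrs0 (hn i) ht0) ?_
    refine mul_le_mul_of_nonneg_left ?_ ht0.le
    rw [hDr]
    have h1 : 0 < rs + t := by linarith
    have h2 : 0 < (rs + t) / nv i := div_pos h1 (hn i)
    have h3 : (rs + t) / nv i ≤ (m * R + R) / nv i :=
      (div_le_div_iff_of_pos_right (hn i)).mpr (by linarith)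
    exact (Real.log_le_log_iff h2 (lt_of_lt_of_le h2 h3)).mpr h3
  have hb2 : ((cs + t) * Real.log ((cs + t) / mv j) - (cs + t) + mv j)
      - (cs * Real.log (cs / mv j) - cs + mv j) ≤ t * Dc := by
    refine le_trans (phi_incr hcs0 (hm j) ht0) ?_
    refine mul_le_mul_of_nonneg_left ?_ ht0.le
    rw [hDc]
    have h1 : 0 < cs + t := by linarith
    have h2 : 0 < (cs + t) / mv j := div_pos h1 (hm j)
    have h3 : (cs + t) / mv j ≤ (n * R + R) / mv j :=
      (div_le_div_iff_of_pos_right (hm j)).mpr (by linarith)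
    exact (Real.log_le_log_iff h2 (lt_of_lt_of_le h2 h3)).mpr h3
  have hb3 : lam * Real.log t ≤ -(Kc + 1) := by
    have h1 : Real.log t ≤ -(Kc + 1) / lam := by
      have h2 : Real.log t ≤ Real.log (Real.exp (-(Kc + 1) / lam)) :=
        (Real.log_le_log_iff ht0 (Real.exp_pos _)).mpr (min_le_right _ _)
      rwa [Real.log_exp] at h2
    have h3 := mul_le_mul_of_nonneg_left h1 hlam.le
    have h4 : lam * (-(Kc + 1) / lam) = -(Kc + 1) := by field_simp
    linarith
  have hfinal : uotObj C lam lamKL nv mv β' ≤ uotObj C lam lamKL nv mv βs - t := by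
    rw [hFβ']
    have s1 : lamKL * ((((rs + t) * Real.log ((rs + t) / nv i) - (rs + t) + nv i)
            - (rs * Real.log (rs / nv i) - rs + nv i))
          + (((cs + t) * Real.log ((cs + t) / mv j) - (cs + t) + mv j)
            - (cs * Real.log (cs / mv j) - cs + mv j)))
        ≤ t * (lamKL * (Dr + Dc)) := by
      have h5 := mul_le_mul_of_nonneg_left (add_le_add hb1 hb2) hlamKL
      nlinarith [h5]
    have s2 : t * (lam * Real.log t) ≤ t * (-(Kc + 1)) :=
      mul_le_mul_of_nonneg_left hb3 ht0.le
    rw [hKcdef] at s2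
    nlinarith [s1, s2]
  have hcontra := hmin β' hβ'K
  linarith

set_option maxHeartbeats 1000000 in
/-- The entropic-regularized UOT objective attains its infimum over entrywise
positive matrices: a minimizer exists. -/
theorem stmt8 {n m : ℕ} (C : Matrix (Fin n) (Fin m) ℝ) (lam lamKL : ℝ)
    (hlam : 0 < lam) (hlamKL : 0 ≤ lamKL)
    (nv : Fin n → ℝ) (mv : Fin m → ℝ) (hn : ∀ i, 0 < nv i) (hm : ∀ j, 0 < mv j) :
    ∃ β ∈ {β : Matrix (Fin n) (Fin m) ℝ | ∀ i j, 0 < β i j},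
      ∀ β' ∈ {β : Matrix (Fin n) (Fin m) ℝ | ∀ i j, 0 < β i j},
        uotObj C lam lamKL nv mv β ≤ uotObj C lam lamKL nv mv β' := by
  classical
  set β₀ : Matrix (Fin n) (Fin m) ℝ := fun _ _ => (1 : ℝ) with hβ₀
  set F0 : ℝ := uotObj C lam lamKL nv mv β₀ with hF0def
  set B : ℝ := lam * ∑ i, ∑ j, Real.exp (-C i j / lam) with hBdef
  set CA : ℝ := ∑ i, ∑ j, |C i j| with hCAdef
  set R : ℝ := max 1 (Real.exp ((|F0| + B + 1 + CA + lam) / lam)) with hRdef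
  have hR1 : (1 : ℝ) ≤ R := le_max_left _ _
  have hR0 : (0 : ℝ) < R := lt_of_lt_of_le one_pos hR1
  have hRexp : Real.exp ((|F0| + B + 1 + CA + lam) / lam) ≤ R := le_max_right _ _
  set K : Set (Matrix (Fin n) (Fin m) ℝ) := {β | ∀ i j, β i j ∈ Set.Icc (0 : ℝ) R} with hKdef
  have hKc : IsCompact K := by
    have hKeq : K = Set.pi Set.univ
        (fun _ : Fin n => Set.pi Set.univ fun _ : Fin m => Set.Icc (0 : ℝ) R) := by
      ext β
      exact ⟨fun h a _ b _ => h a b, fun h a b => h a (Set.mem_univ a) b (Set.mem_univ b)⟩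
    rw [hKeq]
    exact isCompact_univ_pi fun _ => isCompact_univ_pi fun _ => isCompact_Icc
  have hβ₀K : β₀ ∈ K := fun i j => ⟨zero_le_one, hR1⟩
  obtain ⟨βs, hβsK, hmin⟩ := hKc.exists_isMinOn ⟨β₀, hβ₀K⟩
    ((uot_cont C lam lamKL nv mv hn hm).continuousOn)
  have hmin' : ∀ β ∈ K, uotObj C lam lamKL nv mv βs ≤ uotObj C lam lamKL nv mv β :=
    fun β hβ => hmin hβ
  have hpos : ∀ i j, 0 < βs i j :=
    interior_pos C lam lamKL R hlam hlamKL hR0 nv mv hn hm βs hβsK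
      (fun β hβ => hmin' β hβ)
  refine ⟨βs, hpos, ?_⟩
  intro β' hβ'
  by_cases hmem : β' ∈ K
  · exact hmin' β' hmem
  · have hnn : ∀ a b, 0 ≤ β' a b := fun a b => (hβ' a b).le
    have hex : ∃ i j, R < β' i j := by
      by_contra hc
      push_neg at hc
      exact hmem fun i j => ⟨hnn i j, hc i j⟩
    obtain ⟨i, j, hij⟩ := hex
    have h1 := outer_bound C lam lamKL B CA F0 R hlam hlamKL nv mv hn hm hBdef hCAdef
      hR1 hRexp β' hnn i j hij.le
    have h2 := hmin' β₀ hβ₀K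
    rw [← hF0def] at h2
    linarith
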